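/- Let p(ρ) = c₀ρ³ + c₁ with c₀ > 0, so A(ρ) = ρ⁻¹√(p′(ρ)) = √(3c₀). Then on the open set where u ≠ ±ρ√(3c₀), the Lie bracket [X₊, Y₊] of X₊ = √(3c₀)∂_u + ∂_ρ and Y₊ = (u - ρ√(3c₀))⁻¹∂_t + ∂_x vanishes identically, hence the characteristic distribution C₊ = ⟨X₊,Y₊⟩ is integrable. -/

import Mathlib

/- STATEMENT 8: For p(ρ) = c₀ρ³ + c₁ with c₀ > 0 (so A(ρ) = √(3c₀)), on the set
   where u ≠ ±ρ√(3c₀) the Lie bracket of X₊ = √(3c₀)∂_u + ∂_ρ and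
   Y₊ = (u - ρ√(3c₀))⁻¹∂_t + ∂_x vanishes identically, hence C₊ = ⟨X₊,Y₊⟩ is
   integrable. Coordinates on ℝ⁴: 0=t, 1=x, 2=u, 3=ρ. -/

noncomputable def pd (i : Fin 4) (f : (Fin 4 → ℝ) → ℝ) (z : Fin 4 → ℝ) : ℝ :=
  deriv (fun s => f (Function.update z i s)) (z i)

noncomputable def lieBracket (X Y : (Fin 4 → ℝ) → Fin 4 → ℝ) (z : Fin 4 → ℝ) :
    Fin 4 → ℝ :=
  fun i => (∑ j, X z j * pd j (fun w => Y w i) z)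
    - ∑ j, Y z j * pd j (fun w => X w i) z

noncomputable def Xplus (c0 : ℝ) (z : Fin 4 → ℝ) : Fin 4 → ℝ :=
  ![0, 0, Real.sqrt (3 * c0), 1]

noncomputable def Yplus (c0 : ℝ) (z : Fin 4 → ℝ) : Fin 4 → ℝ :=
  ![(z 2 - z 3 * Real.sqrt (3 * c0))⁻¹, 1, 0, 0]

theorem bracket_vanishes_for_cubic_pressure (c0 : ℝ) (hc0 : 0 < c0) :
    ∀ z : Fin 4 → ℝ, 0 < z 3 →
      z 2 ≠ z 3 * Real.sqrt (3 * c0) → z 2 ≠ -(z 3 * Real.sqrt (3 * c0)) →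
      lieBracket (Xplus c0) (Yplus c0) z = 0 ∧
      ∃ a b : ℝ, lieBracket (Xplus c0) (Yplus c0) z
        = a • Xplus c0 z + b • Yplus c0 z := by
  intro z hρ h1 h2
  set k := Real.sqrt (3 * c0) with hk
  have hd : z 2 - z 3 * k ≠ 0 := sub_ne_zero.mpr h1
  -- partial derivatives of X (constant vector field) vanish
  have pdX : ∀ (j : Fin 4) (i : Fin 4), pd j (fun w => Xplus c0 w i) z = 0 := by
    intro j i
    exact deriv_const (z j) (Xplus c0 z i)
  -- partial derivatives of the nontrivial component of Y
  have pd0 : pd 0 (fun w => Yplus c0 w 0) z = 0 := by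
    have h : (fun s => Yplus c0 (Function.update z 0 s) 0)
        = fun _ => (z 2 - z 3 * k)⁻¹ := by
      funext s
      show (Function.update z 0 s 2 - Function.update z 0 s 3 * k)⁻¹ = _
      rw [Function.update_of_ne (by decide), Function.update_of_ne (by decide)]
    rw [pd, h]; exact deriv_const _ _
  have pd1 : pd 1 (fun w => Yplus c0 w 0) z = 0 := by
    have h : (fun s => Yplus c0 (Function.update z 1 s) 0)
        = fun _ => (z 2 - z 3 * k)⁻¹ := by
      funext s
      show (Function.update z 1 s 2 - Function.update z 1 s 3 * k)⁻¹ = _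
      rw [Function.update_of_ne (by decide), Function.update_of_ne (by decide)]
    rw [pd, h]; exact deriv_const _ _
  have pd2 : pd 2 (fun w => Yplus c0 w 0) z = -1 / (z 2 - z 3 * k) ^ 2 := by
    have h : (fun s => Yplus c0 (Function.update z 2 s) 0)
        = fun s => (s - z 3 * k)⁻¹ := by
      funext s
      show (Function.update z 2 s 2 - Function.update z 2 s 3 * k)⁻¹ = _
      rw [Function.update_self, Function.update_of_ne (by decide)]
    rw [pd, h]
    have := ((hasDerivAt_id (z 2)).sub_const (z 3 * k)).inv hd
    simpa using (show HasDerivAt (fun s => (s - z 3 * k)⁻¹) _ (z 2) from this).deriv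
  have pd3 : pd 3 (fun w => Yplus c0 w 0) z = k / (z 2 - z 3 * k) ^ 2 := by
    have h : (fun s => Yplus c0 (Function.update z 3 s) 0)
        = fun s => (z 2 - s * k)⁻¹ := by
      funext s
      show (Function.update z 3 s 2 - Function.update z 3 s 3 * k)⁻¹ = _
      rw [Function.update_of_ne (by decide), Function.update_self]
    rw [pd, h]
    have hin : HasDerivAt (fun s : ℝ => z 2 - s * k) (-k) (z 3) := by
      simpa using ((hasDerivAt_id (z 3)).mul_const k).const_sub (z 2)
    rw [(show HasDerivAt (fun s => (z 2 - s * k)⁻¹) _ (z 3) from hin.inv hd).deriv]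
    ring
  -- constant components of Y
  have pdYc : ∀ (j : Fin 4) (i : Fin 4), i ≠ 0 →
      pd j (fun w => Yplus c0 w i) z = 0 := by
    intro j i hi
    fin_cases i
    · exact absurd rfl hi
    · exact deriv_const (z j) (1 : ℝ)
    · exact deriv_const (z j) (0 : ℝ)
    · exact deriv_const (z j) (0 : ℝ)
  have key : lieBracket (Xplus c0) (Yplus c0) z = 0 := by
    funext i
    show (∑ j, Xplus c0 z j * pd j (fun w => Yplus c0 w i) z)
      - (∑ j, Yplus c0 z j * pd j (fun w => Xplus c0 w i) z) = 0
    rw [Fin.sum_univ_four, Fin.sum_univ_four, pdX 0 i, pdX 1 i, pdX 2 i,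
      pdX 3 i]
    rw [show Xplus c0 z 0 = 0 from rfl, show Xplus c0 z 1 = 0 from rfl,
      show Xplus c0 z 2 = k from rfl, show Xplus c0 z 3 = 1 from rfl]
    by_cases hi : i = 0
    · subst hi
      rw [pd2, pd3]
      ring
    · rw [pdYc 2 i hi, pdYc 3 i hi]
      ring
  exact ⟨key, 0, 0, by simp [key]⟩
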